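/- arXiv:1803.06281 — 3 statements merged into one kernel-verified Lean document; each statement's English description precedes it below -/
import Mathlib

section
/- Let R be a commutative unital ring with 2 invertible, n > 1, and for i ≠ j let s_{i,j} = e_{i,j} - e_{j,i} ∈ K_n(R), where e_{i,j} are the matrix units. If a, b ∈ K_n(R) satisfy [a, s_{i,j}] - [s_{i,j}, a] = [b, s_{i,j}] - [s_{i,j}, b] (equivalently a s_{i,j} - s_{i,j} a = b s_{i,j} - s_{i,j} b), then a^{i,k} = b^{i,k} and a^{j,k} = b^{j,k} for all k distinct from both i and j. -/
open Matrix

/-- If two skew-symmetric matrices `a`, `b` induce the same inner Lie derivation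
value on `s_{i,j} = e_{i,j} - e_{j,i}`, then their `i`-th and `j`-th rows agree
off the positions `i` and `j`. -/
theorem stmt8 {n : ℕ} (hn : 1 < n) (R : Type*) [CommRing R] (h2 : IsUnit (2 : R))
    (i j : Fin n) (hij : i ≠ j)
    (a b : Matrix (Fin n) (Fin n) R) (ha : aᵀ = -a) (hb : bᵀ = -b)
    (s : Matrix (Fin n) (Fin n) R)
    (hs : s = single i j 1 - single j i 1)
    (h : (a * s - s * a) - (s * a - a * s) = (b * s - s * b) - (s * b - b * s)) :
    ∀ k : Fin n, k ≠ i → k ≠ j → a i k = b i k ∧ a j k = b j k := by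
  intro k hki hkj
  have key : ∀ p q : Fin n, (a * s) p q - (s * a) p q = (b * s) p q - (s * b) p q := by
    intro p q
    have H := Matrix.ext_iff.mpr h p q
    simp only [Matrix.sub_apply] at H
    apply h2.mul_left_cancel
    linear_combination H
  subst hs
  constructor
  · have H := key j k
    simp [Matrix.mul_apply, Matrix.sub_apply, Matrix.single, Matrix.of_apply,
      Finset.sum_ite_eq, Finset.sum_ite_eq', hki.symm, hkj.symm, hij, hij.symm,
      sub_mul, mul_sub, ite_and, Finset.sum_sub_distrib] at H
    exact H
  · have H := key i k
    simp [Matrix.mul_apply, Matrix.sub_apply, Matrix.single, Matrix.of_apply,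
      Finset.sum_ite_eq, Finset.sum_ite_eq', hki.symm, hkj.symm, hij, hij.symm,
      sub_mul, mul_sub, ite_and, Finset.sum_sub_distrib] at H
    exact H
end

section
/- Let R be a commutative unital ring with 2 invertible, n > 3, and Δ a 2-local inner derivation on the Lie ring K_n(R) of skew-symmetric n×n matrices. Then there exists a single element a ∈ K_n(R) such that Δ(s_{i,j}) = [a, s_{i,j}] - [s_{i,j}, a] for every pair of distinct indices i, j. -/
open Matrix


namespace Stmt10Aux
variable {n : ℕ} {R : Type*} [CommRing R]

def SS (i j : Fin n) : Matrix (Fin n) (Fin n) R :=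
  single i j 1 - single j i 1

lemma SS_transpose (i j : Fin n) : (SS i j : Matrix (Fin n) (Fin n) R)ᵀ = -SS i j := by
  ext k l
  simp [SS, single, and_comm]

lemma mul_SS (c : Matrix (Fin n) (Fin n) R) (i j k l : Fin n) :
    (c * (SS i j : Matrix (Fin n) (Fin n) R)) k l
      = (if l = j then c k i else 0) - (if l = i then c k j else 0) := by
  simp only [SS, mul_sub, Matrix.sub_apply, mul_apply, single, of_apply, mul_ite, mul_one,
    mul_zero, ite_and, Finset.sum_sub_distrib]
  rw [Finset.sum_ite_eq, Finset.sum_ite_eq]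
  simp [eq_comm]

lemma SS_mul (c : Matrix (Fin n) (Fin n) R) (i j k l : Fin n) :
    ((SS i j : Matrix (Fin n) (Fin n) R) * c) k l
      = (if k = i then c j l else 0) - (if k = j then c i l else 0) := by
  simp only [SS, sub_mul, Matrix.sub_apply, mul_apply, single, of_apply, ite_mul, one_mul,
    zero_mul, ite_and, Finset.sum_sub_distrib]
  by_cases hik : i = k <;> by_cases hjk : j = k <;>
    simp [hik, hjk, Finset.sum_ite_eq, eq_comm]

lemma skew_apply {c : Matrix (Fin n) (Fin n) R} (hc : cᵀ = -c) (p q : Fin n) :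
    c q p = -c p q := by
  have := congrFun (congrFun hc p) q
  simpa using this

lemma skew_diag (h2 : IsUnit (2 : R)) {c : Matrix (Fin n) (Fin n) R} (hc : cᵀ = -c)
    (p : Fin n) : c p p = 0 := by
  have h := skew_apply hc p p
  have h' : (2 : R) * c p p = 2 * 0 := by linear_combination h
  exact h2.mul_left_cancel h'

lemma pin (h2 : IsUnit (2 : R)) {i j : Fin n} (hij : i ≠ j)
    {e e' : Matrix (Fin n) (Fin n) R}
    (h : (e * SS i j - SS i j * e) - (SS i j * e - e * SS i j)
       = (e' * SS i j - SS i j * e') - (SS i j * e' - e' * SS i j))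
    {q : Fin n} (hqi : q ≠ i) (hqj : q ≠ j) :
    e q i = e' q i ∧ e q j = e' q j := by
  constructor
  · have hj := congrFun (congrFun h q) j
    simp only [Matrix.sub_apply, mul_SS, SS_mul, if_pos, if_true, eq_self_iff_true, if_neg hij.symm,
      if_neg hqi, if_neg hqj] at hj
    have h' : (2 : R) * e q i = 2 * e' q i := by linear_combination hj
    exact h2.mul_left_cancel h'
  · have hi := congrFun (congrFun h q) i
    simp only [Matrix.sub_apply, mul_SS, SS_mul, if_pos, if_true, eq_self_iff_true, if_neg hij,
      if_neg hqi, if_neg hqj] at hi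
    have h' : (2 : R) * e q j = 2 * e' q j := by linear_combination -hi
    exact h2.mul_left_cancel h'

lemma comm_of_rows (h2 : IsUnit (2 : R)) {i j : Fin n} (hij : i ≠ j)
    {d : Matrix (Fin n) (Fin n) R} (hd : dᵀ = -d)
    (hri : ∀ q, q ≠ i → q ≠ j → d i q = 0) (hrj : ∀ q, q ≠ i → q ≠ j → d j q = 0) :
    d * SS i j = SS i j * d := by
  have hdiag : ∀ p, d p p = 0 := skew_diag h2 hd
  ext k l
  rw [mul_SS, SS_mul]
  by_cases hki : k = i
  · rw [hki]
    by_cases hli : l = i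
    · rw [hli]
      simp [hij, hij.symm]
      rw [skew_apply hd i j]
    · by_cases hlj : l = j
      · rw [hlj]
        simp [hij, hij.symm, hdiag]
      · simp [hij, hli, hlj, hrj l hli hlj]
  · by_cases hkj : k = j
    · rw [hkj]
      by_cases hli : l = i
      · rw [hli]
        simp [hij, hij.symm, hdiag]
      · by_cases hlj : l = j
        · rw [hlj]
          simp [hij, hij.symm]
          rw [skew_apply hd i j]
        · simp [hij.symm, hli, hlj, hri l hli hlj]
    · by_cases hli : l = i
      · rw [hli]
        simp [hij, hij.symm, hki, hkj]
        rw [skew_apply hd j k, hrj k hki hkj]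
        simp
      · by_cases hlj : l = j
        · rw [hlj]
          simp [hij, hij.symm, hki, hkj]
          rw [skew_apply hd i k, hri k hki hkj]
          simp
        · simp [hki, hkj, hli, hlj]

def pick2 (n : ℕ) (hn : 3 < n) (p q : Fin n) : Fin n :=
  if p.val ≠ 0 ∧ q.val ≠ 0 then ⟨0, by omega⟩
  else if p.val ≠ 1 ∧ q.val ≠ 1 then ⟨1, by omega⟩
  else ⟨2, by omega⟩

lemma pick2_ne (n : ℕ) (hn : 3 < n) (p q : Fin n) :
    pick2 n hn p q ≠ p ∧ pick2 n hn p q ≠ q := by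
  unfold pick2
  split_ifs with hA hB <;> constructor <;>
    (intro h; apply_fun Fin.val at h; simp at h; omega)

def pick3 (n : ℕ) (hn : 3 < n) (i j q : Fin n) : Fin n :=
  if i.val ≠ 0 ∧ j.val ≠ 0 ∧ q.val ≠ 0 then ⟨0, by omega⟩
  else if i.val ≠ 1 ∧ j.val ≠ 1 ∧ q.val ≠ 1 then ⟨1, by omega⟩
  else if i.val ≠ 2 ∧ j.val ≠ 2 ∧ q.val ≠ 2 then ⟨2, by omega⟩
  else ⟨3, by omega⟩

lemma pick3_ne (n : ℕ) (hn : 3 < n) (i j q : Fin n) (hij : i ≠ j) (hqi : q ≠ i)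
    (hqj : q ≠ j) :
    pick3 n hn i j q ≠ i ∧ pick3 n hn i j q ≠ j ∧ pick3 n hn i j q ≠ q := by
  have h1 : i.val ≠ j.val := fun h => hij (Fin.ext h)
  have h2 : q.val ≠ i.val := fun h => hqi (Fin.ext h)
  have h3 : q.val ≠ j.val := fun h => hqj (Fin.ext h)
  unfold pick3
  split_ifs with hA hB hC <;> refine ⟨?_, ?_, ?_⟩ <;>
    (intro h; apply_fun Fin.val at h; simp at h; omega)

end Stmt10Aux

open Stmt10Aux

/-- For a 2-local inner derivation `Δ` on the Lie ring of skew-symmetric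
matrices (`n > 3`), there is a single skew-symmetric `a` such that
`Δ(s_{i,j}) = [a,s_{i,j}] - [s_{i,j},a]` for all distinct `i, j`. -/
theorem stmt10 {n : ℕ} (hn : 3 < n) (R : Type*) [CommRing R] (h2 : IsUnit (2 : R))
    (Δ : Matrix (Fin n) (Fin n) R → Matrix (Fin n) (Fin n) R)
    (hΔ : ∀ x y : Matrix (Fin n) (Fin n) R, xᵀ = -x → yᵀ = -y →
        ∃ c : Matrix (Fin n) (Fin n) R, cᵀ = -c ∧
          Δ x = (c * x - x * c) - (x * c - c * x) ∧
          Δ y = (c * y - y * c) - (y * c - c * y)) :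
    ∃ a : Matrix (Fin n) (Fin n) R, aᵀ = -a ∧
      ∀ i j : Fin n, i ≠ j →
        ∀ s : Matrix (Fin n) (Fin n) R,
          s = single i j 1 - single j i 1 →
          Δ s = (a * s - s * a) - (s * a - a * s) := by
  classical
  choose c hsk hone htwo using hΔ
  -- the diagonal witnesses
  set W : Fin n → Fin n → Matrix (Fin n) (Fin n) R := fun i j =>
    c (SS i j) (SS i j) (SS_transpose i j) (SS_transpose i j) with hWdef
  have hW : ∀ i j : Fin n, Δ (SS i j)
      = (W i j * SS i j - SS i j * W i j) - (SS i j * W i j - W i j * SS i j) :=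
    fun i j => hone _ _ _ _
  have hWsk : ∀ i j : Fin n, (W i j)ᵀ = -(W i j) := fun i j => hsk _ _ _ _
  -- the pair witnesses
  set P : Fin n → Fin n → Fin n → Fin n → Matrix (Fin n) (Fin n) R := fun i j k l =>
    c (SS i j) (SS k l) (SS_transpose i j) (SS_transpose k l) with hPdef
  have hP1 : ∀ i j k l : Fin n, Δ (SS i j)
      = (P i j k l * SS i j - SS i j * P i j k l)
        - (SS i j * P i j k l - P i j k l * SS i j) := fun i j k l => hone _ _ _ _
  have hP2 : ∀ i j k l : Fin n, Δ (SS k l)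
      = (P i j k l * SS k l - SS k l * P i j k l)
        - (SS k l * P i j k l - P i j k l * SS k l) := fun i j k l => htwo _ _ _ _
  have hPsk : ∀ i j k l : Fin n, (P i j k l)ᵀ = -(P i j k l) := fun i j k l => hsk _ _ _ _
  -- the candidate matrix
  set a : Matrix (Fin n) (Fin n) R :=
    Matrix.of fun p q => if p = q then 0 else W p (pick2 n hn p q) p q with hadef
  have ha_apply : ∀ p q : Fin n, p ≠ q → a p q = W p (pick2 n hn p q) p q := by
    intro p q h
    simp [hadef, h]
  have ha_diag : ∀ p : Fin n, a p p = 0 := by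
    intro p
    simp [hadef]
  -- key lemma: any witness for Δ(S i j) agrees with `a` on row i off {i, j}
  have lemD : ∀ (i j q : Fin n), i ≠ j → q ≠ i → q ≠ j →
      ∀ e : Matrix (Fin n) (Fin n) R, eᵀ = -e →
        Δ (SS i j) = (e * SS i j - SS i j * e) - (SS i j * e - e * SS i j) →
        e i q = a i q := by
    intro i j q hij hqi hqj e he hwit
    have hiq : i ≠ q := fun h => hqi h.symm
    have hri : pick2 n hn i q ≠ i := (pick2_ne n hn i q).1
    have hrq : pick2 n hn i q ≠ q := (pick2_ne n hn i q).2
    have hir : i ≠ pick2 n hn i q := hri.symm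
    have hqr : q ≠ pick2 n hn i q := hrq.symm
    have hg1 := hP1 i j i (pick2 n hn i q)
    have hg2 := hP2 i j i (pick2 n hn i q)
    have p1 := (pin h2 hij (hwit.symm.trans hg1) hqi hqj).1
    have p2 := (pin h2 hir (hg2.symm.trans (hW i (pick2 n hn i q))) hqi hqr).1
    rw [ha_apply i q hiq, skew_apply he q i,
      skew_apply (hWsk i (pick2 n hn i q)) q i, p1, p2]
  -- the same for row j
  have lemD2 : ∀ (i j q : Fin n), i ≠ j → q ≠ i → q ≠ j →
      ∀ e : Matrix (Fin n) (Fin n) R, eᵀ = -e →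
        Δ (SS i j) = (e * SS i j - SS i j * e) - (SS i j * e - e * SS i j) →
        e j q = a j q := by
    intro i j q hij hqi hqj e he hwit
    obtain ⟨hfi, hfj, hfq⟩ := pick3_ne n hn i j q hij hqi hqj
    have hjr : j ≠ pick3 n hn i j q := hfj.symm
    have hqr : q ≠ pick3 n hn i j q := hfq.symm
    have hg1 := hP1 i j j (pick3 n hn i j q)
    have hg2 := hP2 i j j (pick3 n hn i j q)
    have p1 := (pin h2 hij (hwit.symm.trans hg1) hqi hqj).2
    have p2 := lemD j (pick3 n hn i j q) q hjr hqj hqr _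
      (hPsk i j j (pick3 n hn i j q)) hg2
    rw [← p2, skew_apply he q j, skew_apply (hPsk i j j (pick3 n hn i j q)) q j, p1]
  -- `a` is skew-symmetric
  have haskew : aᵀ = -a := by
    ext p q
    rw [transpose_apply, Matrix.neg_apply]
    by_cases hpq : p = q
    · rw [hpq, ha_diag q, neg_zero]
    · have hqp : q ≠ p := fun h => hpq h.symm
      have hg1 := hP1 p (pick2 n hn p q) q (pick2 n hn q p)
      have hg2 := hP2 p (pick2 n hn p q) q (pick2 n hn q p)
      have e1 := lemD p (pick2 n hn p q) q (pick2_ne n hn p q).1.symm hqp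
        (pick2_ne n hn p q).2.symm _ (hPsk p (pick2 n hn p q) q (pick2 n hn q p)) hg1
      have e2 := lemD q (pick2 n hn q p) p (pick2_ne n hn q p).1.symm hpq
        (pick2_ne n hn q p).2.symm _ (hPsk p (pick2 n hn p q) q (pick2 n hn q p)) hg2
      rw [← e1, ← e2]
      exact skew_apply (hPsk p (pick2 n hn p q) q (pick2 n hn q p)) p q
  refine ⟨a, haskew, ?_⟩
  intro i j hij s hs
  rw [hs]
  show Δ (SS i j) = (a * SS i j - SS i j * a) - (SS i j * a - a * SS i j)
  have hwit := hW i j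
  have hri : ∀ q : Fin n, q ≠ i → q ≠ j → (a - W i j) i q = 0 := by
    intro q hqi hqj
    rw [Matrix.sub_apply, lemD i j q hij hqi hqj (W i j) (hWsk i j) hwit, sub_self]
  have hrj : ∀ q : Fin n, q ≠ i → q ≠ j → (a - W i j) j q = 0 := by
    intro q hqi hqj
    rw [Matrix.sub_apply, lemD2 i j q hij hqi hqj (W i j) (hWsk i j) hwit, sub_self]
  have hdsk : (a - W i j)ᵀ = -(a - W i j) := by
    rw [transpose_sub, haskew, hWsk i j]
    abel
  have hcomm := comm_of_rows h2 hij hdsk hri hrj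
  rw [sub_mul, mul_sub, sub_eq_sub_iff_sub_eq_sub] at hcomm
  have key2 : SS i j * a - a * SS i j = SS i j * W i j - W i j * SS i j := by
    rw [← neg_sub (a * SS i j) (SS i j * a), hcomm, neg_sub]
  rw [hwit, hcomm, key2]
end

section
/- Let A be a commutative unital algebra over a field of characteristic not 2 and n > 3. Every 2-local inner derivation on the Lie algebra K_n(A) of skew-symmetric n×n matrices over A is an inner derivation. -/
open Matrix

namespace Stmt12Aux

variable {n : ℕ} {A : Type*} [CommRing A]

/-- The basic skew-symmetric matrix `E_kl - E_lk`. -/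
def ee (k l : Fin n) : Matrix (Fin n) (Fin n) A :=
  single k l 1 - single l k 1

lemma ee_skew (k l : Fin n) : (ee k l : Matrix (Fin n) (Fin n) A)ᵀ = -ee k l := by
  ext p q
  simp only [ee, transpose_apply, Matrix.sub_apply, Matrix.neg_apply, single, of_apply,
    neg_sub]
  simp only [show (k = q ∧ l = p) ↔ (l = p ∧ k = q) from and_comm,
    show (l = q ∧ k = p) ↔ (k = p ∧ l = q) from and_comm]

lemma Dcol1 (c : Matrix (Fin n) (Fin n) A) {k l p : Fin n} (hkl : k ≠ l) (hpk : p ≠ k)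
    (hpl : p ≠ l) :
    (((c * ee k l - ee k l * c) - (ee k l * c - c * ee k l)) :
      Matrix (Fin n) (Fin n) A) p l = c p k + c p k := by
  simp only [Matrix.sub_apply, ee, mul_sub, sub_mul]
  simp [hkl, hpk, hpl, hkl.symm, hpk.symm, hpl.symm]

lemma Dcol2 (c : Matrix (Fin n) (Fin n) A) {k l p : Fin n} (hkl : k ≠ l) (hpk : p ≠ k)
    (hpl : p ≠ l) :
    (((c * ee k l - ee k l * c) - (ee k l * c - c * ee k l)) :
      Matrix (Fin n) (Fin n) A) p k = -(c p l) - c p l := by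
  simp only [Matrix.sub_apply, ee, mul_sub, sub_mul]
  simp [hkl, hpk, hpl, hkl.symm, hpk.symm, hpl.symm]

lemma D_skew (c x : Matrix (Fin n) (Fin n) A) (hc : cᵀ = -c) (hx : xᵀ = -x) :
    ((c * x - x * c) - (x * c - c * x))ᵀ = -((c * x - x * c) - (x * c - c * x)) := by
  simp only [transpose_sub, transpose_mul, hc, hx]
  noncomm_ring

/-- Pick an index different from both `i` and `j`. -/
def pick (hn : 3 < n) (i j : Fin n) : Fin n :=
  if (⟨0, by omega⟩ : Fin n) = i ∨ (⟨0, by omega⟩ : Fin n) = j then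
    if (⟨1, by omega⟩ : Fin n) = i ∨ (⟨1, by omega⟩ : Fin n) = j then ⟨2, by omega⟩
    else ⟨1, by omega⟩
  else ⟨0, by omega⟩

lemma pick_spec (hn : 3 < n) (i j : Fin n) : pick hn i j ≠ i ∧ pick hn i j ≠ j := by
  unfold pick
  split_ifs with h1 h2 <;> constructor <;> intro h <;>
    simp only [Fin.ext_iff, not_or] at * <;> omega

end Stmt12Aux

open Stmt12Aux

/-- Every 2-local inner derivation on the Lie algebra of skew-symmetric `n×n`
matrices over a commutative unital algebra over a field of characteristic ≠ 2
(`n > 3`) is an inner derivation. -/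
theorem stmt12 {n : ℕ} (hn : 3 < n) (F : Type*) [Field F] (hF : (2 : F) ≠ 0)
    (A : Type*) [CommRing A] [Algebra F A]
    (Δ : Matrix (Fin n) (Fin n) A → Matrix (Fin n) (Fin n) A)
    (hΔ : ∀ x y : Matrix (Fin n) (Fin n) A, xᵀ = -x → yᵀ = -y →
        ∃ c : Matrix (Fin n) (Fin n) A, cᵀ = -c ∧
          Δ x = (c * x - x * c) - (x * c - c * x) ∧
          Δ y = (c * y - y * c) - (y * c - c * y)) :
    ∃ a : Matrix (Fin n) (Fin n) A, aᵀ = -a ∧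
      ∀ x : Matrix (Fin n) (Fin n) A, xᵀ = -x →
        Δ x = (a * x - x * a) - (x * a - a * x) := by
  classical
  -- cancellation of doubling
  have cancel2 : ∀ u v : A, u + u = v + v → u = v := by
    intro u v h
    have h2 : (2 : F) • u = (2 : F) • v := by rw [two_smul, two_smul]; exact h
    calc u = (2⁻¹ : F) • ((2 : F) • u) := by rw [smul_smul, inv_mul_cancel₀ hF, one_smul]
      _ = (2⁻¹ : F) • ((2 : F) • v) := by rw [h2]
      _ = v := by rw [smul_smul, inv_mul_cancel₀ hF, one_smul]
  have diag0 : ∀ c : Matrix (Fin n) (Fin n) A, cᵀ = -c → ∀ k, c k k = 0 := by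
    intro c hc k
    have h := congrFun (congrFun hc k) k
    simp only [transpose_apply, Matrix.neg_apply] at h
    refine cancel2 _ 0 ?_
    rw [add_zero]
    nth_rewrite 2 [h]
    ring
  have skw : ∀ c : Matrix (Fin n) (Fin n) A, cᵀ = -c → ∀ i j, c j i = -(c i j) := by
    intro c hc i j
    have h := congrFun (congrFun hc i) j
    simpa using h
  -- the candidate inner element
  set a : Matrix (Fin n) (Fin n) A := Matrix.of fun i j =>
    if i = j then 0 else (2⁻¹ : F) • (Δ (ee j (pick hn i j)) i (pick hn i j)) with ha
  have adiag : ∀ i, a i i = 0 := by intro i; simp [ha]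
  have adef : ∀ i j, i ≠ j →
      a i j + a i j = Δ (ee j (pick hn i j)) i (pick hn i j) := by
    intro i j hij
    have h : a i j = (2⁻¹ : F) • (Δ (ee j (pick hn i j)) i (pick hn i j)) := by
      simp [ha, hij]
    rw [h, ← add_smul]
    have h12 : (2⁻¹ : F) + 2⁻¹ = 1 := by
      rw [← two_mul, mul_inv_cancel₀ hF]
    rw [h12, one_smul]
  -- key independence fact
  have key : ∀ i j m' : Fin n, i ≠ j → m' ≠ i → m' ≠ j →
      Δ (ee j m') i m' = a i j + a i j := by
    intro i j m' hij hmi hmj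
    obtain ⟨hm1, hm2⟩ := pick_spec hn i j
    obtain ⟨c, hcs, hc1, hc2⟩ := hΔ (ee j (pick hn i j)) (ee j m') (ee_skew _ _) (ee_skew _ _)
    have e1 : Δ (ee j (pick hn i j)) i (pick hn i j) = c i j + c i j := by
      rw [hc1]; exact Dcol1 c (fun h => hm2 h.symm) hij (fun h => hm1 h.symm)
    have e2 : Δ (ee j m') i m' = c i j + c i j := by
      rw [hc2]; exact Dcol1 c (fun h => hmj h.symm) hij (fun h => hmi h.symm)
    rw [e2, adef i j hij, e1]
  -- direct column fact
  have key1 : ∀ k l r : Fin n, k ≠ l → r ≠ k → r ≠ l →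
      Δ (ee k l) r l = a r k + a r k := by
    intro k l r hkl hrk hrl
    exact key r k l hrk (fun h => hrl h.symm) (fun h => hkl h.symm)
  -- bridging column fact
  have key2 : ∀ k l r : Fin n, k ≠ l → r ≠ k → r ≠ l →
      Δ (ee k l) r k = -(a r l) - a r l := by
    intro k l r hkl hrk hrl
    obtain ⟨c, hcs, hc1, hc2⟩ := hΔ (ee k l) (ee l k) (ee_skew _ _) (ee_skew _ _)
    have e1 : Δ (ee k l) r k = -(c r l) - c r l := by
      rw [hc1]; exact Dcol2 c hkl hrk hrl
    have e2 : Δ (ee l k) r k = c r l + c r l := by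
      rw [hc2]; exact Dcol1 c (fun h => hkl h.symm) hrl hrk
    have e3 : Δ (ee l k) r k = a r l + a r l :=
      key r l k hrl (fun h => hrk h.symm) hkl
    have e4 : c r l = a r l := cancel2 _ _ (e2.symm.trans e3)
    rw [e1, e4]
  -- a is skew-symmetric
  have askew : aᵀ = -a := by
    ext i j
    simp only [transpose_apply, Matrix.neg_apply]
    by_cases hij : i = j
    · subst hij; rw [adiag, neg_zero]
    have hji : j ≠ i := fun h => hij h.symm
    obtain ⟨hm1, hm2⟩ := pick_spec hn i j
    set m := pick hn i j
    obtain ⟨c, hcs, hc1, hc2⟩ := hΔ (ee j m) (ee i m) (ee_skew _ _) (ee_skew _ _)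
    have e1 : Δ (ee j m) i m = c i j + c i j := by
      rw [hc1]; exact Dcol1 c (fun h => hm2 h.symm) hij (fun h => hm1 h.symm)
    have e2 : Δ (ee i m) j m = c j i + c j i := by
      rw [hc2]; exact Dcol1 c (fun h => hm1 h.symm) hji (fun h => hm2 h.symm)
    have f1 : a i j = c i j := cancel2 _ _ ((key i j m hij hm1 hm2).symm.trans e1)
    have f2 : a j i = c j i := cancel2 _ _ ((key j i m hji hm2 hm1).symm.trans e2)
    rw [f2, f1, skw c hcs i j]
  refine ⟨a, askew, ?_⟩
  intro x hx
  ext k l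
  by_cases hkl : k = l
  · subst hkl
    obtain ⟨c, hcs, hc1, _⟩ := hΔ x x hx hx
    rw [hc1, diag0 _ (D_skew c x hcs hx) k, diag0 _ (D_skew a x askew hx) k]
  · obtain ⟨c, hcs, hcx, hcE⟩ := hΔ x (ee k l) hx (ee_skew k l)
    have hck : ∀ r, r ≠ k → r ≠ l → c r k = a r k := by
      intro r h1 h2
      refine cancel2 _ _ ?_
      have e1 : Δ (ee k l) r l = c r k + c r k := by
        rw [hcE]; exact Dcol1 c hkl h1 h2
      rw [← e1, key1 k l r hkl h1 h2]
    have hcl : ∀ r, r ≠ k → r ≠ l → c r l = a r l := by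
      intro r h1 h2
      have e1 : Δ (ee k l) r k = -(c r l) - c r l := by
        rw [hcE]; exact Dcol2 c hkl h1 h2
      have e2 := e1.symm.trans (key2 k l r hkl h1 h2)
      refine cancel2 _ _ ?_
      have h3 := congrArg (fun t => -t) e2
      simpa using h3
    have sum1 : (c * x) k l = (a * x) k l := by
      simp only [mul_apply]
      refine Finset.sum_congr rfl ?_
      intro r _
      by_cases h1 : r = k
      · subst h1; rw [diag0 c hcs, adiag]
      by_cases h2 : r = l
      · subst h2; rw [diag0 x hx]; simp only [mul_zero, zero_mul]
      have h4 := hck r h1 h2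
      have h5 := skw c hcs k r
      have h6 := skw a askew k r
      have h7 : c k r = a k r := by
        calc c k r = -(c r k) := by rw [h5, neg_neg]
          _ = -(a r k) := by rw [h4]
          _ = a k r := by rw [h6, neg_neg]
      rw [h7]
    have sum2 : (x * c) k l = (x * a) k l := by
      simp only [mul_apply]
      refine Finset.sum_congr rfl ?_
      intro r _
      by_cases h1 : r = k
      · subst h1; rw [diag0 x hx]; simp only [mul_zero, zero_mul]
      by_cases h2 : r = l
      · subst h2; rw [diag0 c hcs, adiag]
      rw [hcl r h1 h2]
    rw [hcx]
    simp only [Matrix.sub_apply, sum1, sum2]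
end
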